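/- arXiv:1504.01119 — 2 statements merged into one kernel-verified Lean document; each statement's English description precedes it below -/
import Mathlib

section
/- Let T be a tournament on n vertices, 0 < c < 1, and let A₁, T₁ ⊆ V(T) be disjoint with T₁ transitive, |A₁| ≥ cn, |T₁| ≥ c·n^{ε_c}, and every vertex of A₁ adjacent to every vertex of T₁ (or every vertex of T₁ adjacent to every vertex of A₁), where ε_c = log(1−c)/log(c). If the subtournament induced by A₁ contains a transitive subset of size at least |A₁|^{ε_c}, then T contains a transitive subset of size at least n^{ε_c}. -/
open Finset

def IsTournament {V : Type*} (Adj : V → V → Prop) : Prop :=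
  (∀ v, ¬ Adj v v) ∧ ∀ u v : V, u ≠ v → (Adj u v ↔ ¬ Adj v u)

def HasDirCycleIn {V : Type*} (Adj : V → V → Prop) (S : Set V) : Prop :=
  ∃ k : ℕ, 3 ≤ k ∧ ∃ f : ℕ → V, Set.InjOn f (Set.Iio k) ∧ (∀ i < k, f i ∈ S) ∧
    ∀ i < k, Adj (f i) (f ((i + 1) % k))

/-- A set of vertices is transitive if it induces no directed cycle. -/
def TransSet {V : Type*} (Adj : V → V → Prop) (S : Set V) : Prop := ¬ HasDirCycleIn Adj S

open scoped Classical in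
/-- Directed density from `X` to `Y`. -/
noncomputable def dens {V : Type*} (Adj : V → V → Prop) (X Y : Finset V) : ℝ :=
  (((X ×ˢ Y).filter fun p => Adj p.1 p.2).card : ℝ) / ((X.card : ℝ) * (Y.card : ℝ))

lemma trans_union {V : Type*} (Adj : V → V → Prop) (hT : IsTournament Adj)
    (S T : Set V) (hS : TransSet Adj S) (hTt : TransSet Adj T)
    (hdir : ∀ v ∈ S, ∀ w ∈ T, Adj v w) : TransSet Adj (S ∪ T) := by
  rintro ⟨k, hk3, f, hinj, hmem, hadj⟩
  have hkpos : 0 < k := by omega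
  -- step: successor of a T-vertex is in T
  have step : ∀ j < k, f j ∈ T → f ((j + 1) % k) ∈ T := by
    intro j hj hjT
    have hsucc : (j + 1) % k < k := Nat.mod_lt _ hkpos
    have hne : j ≠ (j + 1) % k := by
      rcases Nat.lt_or_ge (j + 1) k with h | h
      · rw [Nat.mod_eq_of_lt h]; omega
      · have : j + 1 = k := by omega
        rw [this, Nat.mod_self]; omega
    rcases hmem _ hsucc with hmS | hmT
    · exfalso
      have hfne : f j ≠ f ((j + 1) % k) := fun h => hne (hinj hj hsucc h)
      have h1 : Adj (f ((j + 1) % k)) (f j) := hdir _ hmS _ hjT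
      have h2 : Adj (f j) (f ((j + 1) % k)) := hadj j hj
      exact ((hT.2 _ _ hfne).mp h2) h1
    · exact hmT
  by_cases hall : ∀ i < k, f i ∈ S
  · exact hS ⟨k, hk3, f, hinj, hall, hadj⟩
  · push_neg at hall
    obtain ⟨i, hik, hiS⟩ := hall
    have hiT : f i ∈ T := (hmem i hik).resolve_left hiS
    have hallT : ∀ m : ℕ, f ((i + m) % k) ∈ T := by
      intro m
      induction m with
      | zero => simpa [Nat.mod_eq_of_lt hik] using hiT
      | succ m ih =>
        have hlt : (i + m) % k < k := Nat.mod_lt _ hkpos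
        have := step _ hlt ih
        have heq : ((i + m) % k + 1) % k = (i + (m + 1)) % k := by
          rw [show i + (m + 1) = (i + m) + 1 from by omega,
            Nat.add_mod (i + m) 1 k, Nat.mod_eq_of_lt (show 1 < k by omega)]
        rwa [heq] at this
    refine hTt ⟨k, hk3, f, hinj, ?_, hadj⟩
    intro j hj
    have := hallT (j + k - i)
    have heq : (i + (j + k - i)) % k = j := by
      have h1 : i + (j + k - i) = j + k := by omega
      rw [h1, Nat.add_mod_right, Nat.mod_eq_of_lt hj]
    rwa [heq] at this

theorem saturated_pair_gives_poly_transitive {V : Type*} [Fintype V]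
    (Adj : V → V → Prop) (hT : IsTournament Adj) (c εc : ℝ)
    (hc : 0 < c) (hc1 : c < 1)
    (hεc : εc = Real.log (1 - c) / Real.log c)
    (A₁ T₁ : Finset V) (hdisj : Disjoint A₁ T₁) (htr : TransSet Adj ↑T₁)
    (hA : (A₁.card : ℝ) ≥ c * Fintype.card V)
    (hT₁ : (T₁.card : ℝ) ≥ c * (Fintype.card V : ℝ) ^ εc)
    (hcomp : (∀ v ∈ A₁, ∀ w ∈ T₁, Adj v w) ∨ (∀ w ∈ T₁, ∀ v ∈ A₁, Adj w v))
    (hsub : ∃ S ⊆ A₁, TransSet Adj ↑S ∧ (S.card : ℝ) ≥ (A₁.card : ℝ) ^ εc) :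
    ∃ S : Finset V, TransSet Adj ↑S ∧ (S.card : ℝ) ≥ (Fintype.card V : ℝ) ^ εc := by
  classical
  obtain ⟨S, hSA, hStr, hScard⟩ := hsub
  set n : ℝ := (Fintype.card V : ℝ) with hn
  have hn0 : 0 ≤ n := Nat.cast_nonneg _
  have hlogc : Real.log c < 0 := Real.log_neg hc hc1
  have hlog1c : Real.log (1 - c) < 0 := Real.log_neg (by linarith) (by linarith)
  have hεpos : 0 < εc := by
    rw [hεc]; exact div_pos_of_neg_of_neg hlog1c hlogc
  have hcε : c ^ εc = 1 - c := by
    rw [Real.rpow_def_of_pos hc, hεc, mul_comm, div_mul_cancel₀ _ (ne_of_lt hlogc),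
      Real.exp_log (by linarith)]
  -- size bound for S
  have hScard' : (S.card : ℝ) ≥ (1 - c) * n ^ εc := by
    have h1 : (A₁.card : ℝ) ^ εc ≥ (c * n) ^ εc :=
      Real.rpow_le_rpow (by positivity) hA hεpos.le
    have h2 : (c * n) ^ εc = c ^ εc * n ^ εc := Real.mul_rpow hc.le hn0
    rw [h2, hcε] at h1
    linarith
  -- disjointness
  have hdSj : Disjoint S T₁ := hdisj.mono_left hSA
  refine ⟨S ∪ T₁, ?_, ?_⟩
  · have hcoe : ((S ∪ T₁ : Finset V) : Set V) = (↑S : Set V) ∪ ↑T₁ := by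
      simp
    rw [hcoe]
    rcases hcomp with h | h
    · exact trans_union Adj hT _ _ hStr htr fun v hv w hw => h v (hSA hv) w hw
    · rw [Set.union_comm]
      exact trans_union Adj hT _ _ htr hStr fun w hw v hv => h w hw v (hSA hv)
  · rw [card_union_of_disjoint hdSj]
    push_cast
    have : (1 - c) * n ^ εc + c * n ^ εc = n ^ εc := by ring
    linarith
end

section
/- Let T be a tournament and A₁,...,A_k pairwise disjoint vertex subsets with |A_i| ≥ cn (n = |T|) and d(A_i,A_j) ≥ 1 − λ for all 1 ≤ i < j ≤ k, where 4λk² < 1. Then there exist subsets A'_i ⊆ A_i with |A'_i| ≥ |A_i|/2 such that for all 1 ≤ i < j ≤ k, every vertex v ∈ A'_i satisfies d({v}, A'_j) ≥ 1 − 4λk and every vertex w ∈ A'_j satisfies d(A'_i, {w}) ≥ 1 − 4λk. -/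
open Finset

open scoped Classical

section Helpers

variable {V : Type*} (Adj : V → V → Prop)

/-- out-degree of `v` into `S`. -/
noncomputable def outd (v : V) (S : Finset V) : ℕ := (S.filter fun y => Adj v y).card

/-- in-degree of `v` from `S`. -/
noncomputable def ind (v : V) (S : Finset V) : ℕ := (S.filter fun x => Adj x v).card

set_option maxRecDepth 8000 in
lemma dens_singleton_left (v : V) (S : Finset V) :
    _root_.dens Adj {v} S = (outd Adj v S : ℝ) / S.card := by
  unfold _root_.dens outd
  have h : (({v} ×ˢ S).filter fun p => Adj p.1 p.2) = {v} ×ˢ (S.filter fun y => Adj v y) := by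
    ext ⟨a, b⟩
    simp only [Finset.mem_filter, Finset.mem_product, Finset.mem_singleton]
    constructor
    · rintro ⟨⟨rfl, hb⟩, h⟩; exact ⟨rfl, hb, h⟩
    · rintro ⟨rfl, hb, h⟩; exact ⟨⟨rfl, hb⟩, h⟩
  rw [h, Finset.card_product, Finset.card_singleton]
  norm_num

set_option maxRecDepth 8000 in
lemma dens_singleton_right (w : V) (S : Finset V) :
    _root_.dens Adj S {w} = (ind Adj w S : ℝ) / S.card := by
  unfold _root_.dens ind
  have h : ((S ×ˢ {w}).filter fun p => Adj p.1 p.2) = (S.filter fun x => Adj x w) ×ˢ {w} := by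
    ext ⟨a, b⟩
    simp only [Finset.mem_filter, Finset.mem_product, Finset.mem_singleton]
    constructor
    · rintro ⟨⟨ha, rfl⟩, h⟩; exact ⟨⟨ha, h⟩, rfl⟩
    · rintro ⟨⟨ha, h⟩, rfl⟩; exact ⟨⟨ha, rfl⟩, h⟩
  rw [h, Finset.card_product, Finset.card_singleton]
  norm_num

lemma edges_eq_sum_out (X Y : Finset V) :
    ((X ×ˢ Y).filter fun p => Adj p.1 p.2).card = ∑ x ∈ X, outd Adj x Y := by
  unfold outd
  rw [Finset.card_filter, Finset.sum_product]
  exact Finset.sum_congr rfl fun x _ => (Finset.card_filter _ _).symm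

lemma edges_eq_sum_in (X Y : Finset V) :
    ((X ×ˢ Y).filter fun p => Adj p.1 p.2).card = ∑ y ∈ Y, ind Adj y X := by
  unfold ind
  rw [Finset.card_filter, Finset.sum_product_right]
  exact Finset.sum_congr rfl fun y _ => (Finset.card_filter _ _).symm

lemma filter_card_le_of_subset {S' S : Finset V} (h : S' ⊆ S) (P : V → Prop) :
    (S.filter fun v => P v).card ≤ (S'.filter fun v => P v).card + (S \ S').card := by
  have hsub : (S.filter fun v => P v) ⊆ (S'.filter fun v => P v) ∪ (S \ S') := by
    intro v hv
    simp only [Finset.mem_filter, Finset.mem_union, Finset.mem_sdiff] at *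
    by_cases hv' : v ∈ S' <;> tauto
  exact le_trans (Finset.card_le_card hsub) (Finset.card_union_le _ _)

lemma outd_le {S' S : Finset V} (h : S' ⊆ S) (v : V) :
    outd Adj v S ≤ outd Adj v S' + (S \ S').card :=
  filter_card_le_of_subset h _

lemma ind_le {S' S : Finset V} (h : S' ⊆ S) (w : V) :
    ind Adj w S ≤ ind Adj w S' + (S \ S').card :=
  filter_card_le_of_subset h _

lemma bad_count {X : Finset V} (g : V → ℕ) (M : ℕ) (lam kr : ℝ)
    (hlam : 0 ≤ lam) (hkr : 0 < kr) (hM : 0 < M)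
    (hg : ∀ v ∈ X, g v ≤ M)
    (hsum : ∑ v ∈ X, ((M : ℝ) - g v) ≤ lam * X.card * M) :
    ((X.filter fun v => 2 * lam * kr * M < (M : ℝ) - g v).card : ℝ) ≤ X.card / (2 * kr) := by
  set B := X.filter fun v => 2 * lam * kr * M < (M : ℝ) - g v with hB
  have hBX : B ⊆ X := Finset.filter_subset _ _
  have hnonneg : ∀ v ∈ X, (0 : ℝ) ≤ (M : ℝ) - g v := by
    intro v hv
    have : (g v : ℝ) ≤ M := by exact_mod_cast hg v hv
    linarith
  have hsumB : ∑ v ∈ B, ((M : ℝ) - g v) ≤ ∑ v ∈ X, ((M : ℝ) - g v) :=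
    Finset.sum_le_sum_of_subset_of_nonneg hBX (fun v hv _ => hnonneg v hv)
  have hMpos : (0 : ℝ) < M := by exact_mod_cast hM
  rcases eq_or_lt_of_le hlam with h0 | hpos
  · have hBe : B = ∅ := by
      by_contra hne
      obtain ⟨v, hv⟩ := Finset.nonempty_iff_ne_empty.mpr hne
      have hvB : 2 * lam * kr * M < (M : ℝ) - g v := (Finset.mem_filter.mp hv).2
      have h1 : (M : ℝ) - g v ≤ ∑ w ∈ B, ((M : ℝ) - g w) :=
        Finset.single_le_sum (fun w hw => hnonneg w (hBX hw)) hv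
      subst h0
      nlinarith
    rw [hBe]
    simp only [Finset.card_empty, Nat.cast_zero]
    positivity
  · have hcard : (B.card : ℝ) * (2 * lam * kr * M) ≤ ∑ v ∈ B, ((M : ℝ) - g v) := by
      have := Finset.card_nsmul_le_sum B (fun v => (M : ℝ) - g v) (2 * lam * kr * M)
        (fun v hv => le_of_lt (Finset.mem_filter.mp hv).2)
      simpa [nsmul_eq_mul] using this
    rw [le_div_iff₀ (by positivity)]
    have hkey : (B.card : ℝ) * (2 * lam * kr * M) ≤ lam * X.card * M := by linarith
    nlinarith [mul_pos hpos hMpos]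

end Helpers

theorem make_l_sequence_smooth {V : Type*} [Fintype V] (Adj : V → V → Prop)
    (hT : IsTournament Adj) (k : ℕ) (A : Fin k → Finset V) (c lam : ℝ)
    (hc : 0 < c) (hlam0 : 0 ≤ lam)
    (hdisj : ∀ i j, i ≠ j → Disjoint (A i) (A j))
    (hsize : ∀ i, ((A i).card : ℝ) ≥ c * Fintype.card V)
    (hdens : ∀ i j : Fin k, i < j → dens Adj (A i) (A j) ≥ 1 - lam)
    (hlk : 4 * lam * (k : ℝ) ^ 2 < 1) :
    ∃ A' : Fin k → Finset V, (∀ i, A' i ⊆ A i) ∧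
      (∀ i, ((A' i).card : ℝ) ≥ ((A i).card : ℝ) / 2) ∧
      ∀ i j : Fin k, i < j →
        (∀ v ∈ A' i, dens Adj {v} (A' j) ≥ 1 - 4 * lam * k) ∧
        (∀ w ∈ A' j, dens Adj (A' i) {w} ≥ 1 - 4 * lam * k) := by
  classical
  by_cases hk2 : 2 ≤ k
  swap
  · -- trivial case k ≤ 1 : no pairs i < j exist
    refine ⟨A, fun i => Finset.Subset.refl _, fun i => ?_, fun i j hij => ?_⟩
    · have : (0 : ℝ) ≤ (A i).card := by positivity
      linarith
    · exfalso
      have h1 : (i : ℕ) < (j : ℕ) := hij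
      have h2 : (j : ℕ) < k := j.isLt
      omega
  · -- main case k ≥ 2
    have hk0 : (0 : ℝ) < k := by
      have : (2 : ℝ) ≤ k := by exact_mod_cast hk2
      linarith
    have hn : 0 < Fintype.card V := by
      by_contra hcon
      have hV : Fintype.card V = 0 := by omega
      have hE : IsEmpty V := Fintype.card_eq_zero_iff.mp hV
      have hA : ∀ i : Fin k, A i = ∅ := fun i => Finset.eq_empty_of_isEmpty _
      have h01 : (⟨0, by omega⟩ : Fin k) < ⟨1, by omega⟩ := by
        simp [Fin.lt_def]
      have hd := hdens _ _ h01
      rw [hA, hA] at hd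
      have hd0 : _root_.dens Adj (∅ : Finset V) (∅ : Finset V) = 0 := by
        unfold _root_.dens
        simp
      rw [hd0] at hd
      have hk2R : (2 : ℝ) ≤ k := by exact_mod_cast hk2
      have hk4 : (4 : ℝ) ≤ (k : ℝ) ^ 2 := by nlinarith
      nlinarith
    have hApos : ∀ i, (0 : ℝ) < (A i).card := by
      intro i
      have h1 : (0 : ℝ) < c * Fintype.card V := by positivity
      linarith [hsize i]
    have hAposN : ∀ i, 0 < (A i).card := by
      intro i; exact_mod_cast hApos i
    -- edge count lower bound
    have hedge : ∀ i j : Fin k, i < j →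
        ((1 : ℝ) - lam) * ((A i).card * (A j).card)
          ≤ (((A i ×ˢ A j).filter fun p => Adj p.1 p.2).card : ℝ) := by
      intro i j hij
      have hXY : (0 : ℝ) < ((A i).card : ℝ) * (A j).card := by
        have := hApos i; have := hApos j; positivity
      have hd := hdens i j hij
      unfold _root_.dens at hd
      rw [ge_iff_le, le_div_iff₀ hXY] at hd
      linarith
    -- bad out vertices for a pair
    have pairOut : ∀ i j : Fin k, i < j →
        (((A i).filter fun v =>
            2 * lam * (k : ℝ) * ((A j).card : ℝ) < ((A j).card : ℝ) - outd Adj v (A j)).card : ℝ)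
          ≤ (A i).card / (2 * k) := by
      intro i j hij
      apply bad_count (fun v => outd Adj v (A j)) (A j).card lam k hlam0 hk0 (hAposN j)
      · intro v hv
        exact Finset.card_le_card (Finset.filter_subset _ _)
      · have hsplit : ∑ v ∈ A i, (((A j).card : ℝ) - outd Adj v (A j))
            = ((A i).card : ℝ) * (A j).card
              - (((A i ×ˢ A j).filter fun p => Adj p.1 p.2).card : ℝ) := by
          rw [Finset.sum_sub_distrib, Finset.sum_const, edges_eq_sum_out Adj (A i) (A j)]
          push_cast
          ring
        rw [hsplit]
        have := hedge i j hij
        nlinarith [hApos i, hApos j]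
    -- bad in vertices for a pair
    have pairIn : ∀ i j : Fin k, i < j →
        (((A j).filter fun w =>
            2 * lam * (k : ℝ) * ((A i).card : ℝ) < ((A i).card : ℝ) - ind Adj w (A i)).card : ℝ)
          ≤ (A j).card / (2 * k) := by
      intro i j hij
      apply bad_count (fun w => ind Adj w (A i)) (A i).card lam k hlam0 hk0 (hAposN i)
      · intro w hw
        exact Finset.card_le_card (Finset.filter_subset _ _)
      · have hsplit : ∑ w ∈ A j, (((A i).card : ℝ) - ind Adj w (A i))
            = ((A j).card : ℝ) * (A i).card
              - (((A i ×ˢ A j).filter fun p => Adj p.1 p.2).card : ℝ) := by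
          rw [Finset.sum_sub_distrib, Finset.sum_const, edges_eq_sum_in Adj (A i) (A j)]
          push_cast
          ring
        rw [hsplit]
        have := hedge i j hij
        nlinarith [hApos i, hApos j]
    -- the refined sets
    set A' : Fin k → Finset V := fun i => (A i).filter (fun v =>
        (∀ j, i < j → ((A j).card : ℝ) - outd Adj v (A j) ≤ 2 * lam * k * ((A j).card : ℝ)) ∧
        (∀ j, j < i → ((A j).card : ℝ) - ind Adj v (A j) ≤ 2 * lam * k * ((A j).card : ℝ)))
      with hA'def
    have hsub : ∀ i, A' i ⊆ A i := fun i => Finset.filter_subset _ _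
    have hhalf : ∀ i, ((A i).card : ℝ) / 2 ≤ (A' i).card := by
      intro i
      have hbadsub : A i \ A' i ⊆ Finset.univ.biUnion (fun j : Fin k => (A i).filter (fun v =>
          (i < j ∧ 2 * lam * k * ((A j).card : ℝ) < ((A j).card : ℝ) - outd Adj v (A j)) ∨
          (j < i ∧ 2 * lam * k * ((A j).card : ℝ) < ((A j).card : ℝ) - ind Adj v (A j)))) := by
        intro v hv
        obtain ⟨hvA, hvn⟩ := Finset.mem_sdiff.mp hv
        rw [Finset.mem_biUnion]
        by_contra hcon
        push_neg at hcon
        apply hvn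
        rw [hA'def]
        rw [Finset.mem_filter]
        refine ⟨hvA, fun j hj => ?_, fun j hj => ?_⟩
        · by_contra hle
          push_neg at hle
          exact hcon j (Finset.mem_univ j) (Finset.mem_filter.mpr ⟨hvA, Or.inl ⟨hj, hle⟩⟩)
        · by_contra hle
          push_neg at hle
          exact hcon j (Finset.mem_univ j) (Finset.mem_filter.mpr ⟨hvA, Or.inr ⟨hj, hle⟩⟩)
      have hbadcard : ((A i \ A' i).card : ℝ) ≤ (A i).card / 2 := by
        have h1 : (A i \ A' i).card ≤ ∑ j : Fin k, ((A i).filter (fun v =>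
            (i < j ∧ 2 * lam * k * ((A j).card : ℝ) < ((A j).card : ℝ) - outd Adj v (A j)) ∨
            (j < i ∧ 2 * lam * k * ((A j).card : ℝ) < ((A j).card : ℝ) - ind Adj v (A j)))).card :=
          le_trans (Finset.card_le_card hbadsub) (Finset.card_biUnion_le)
        have h2 : ∀ j : Fin k, (((A i).filter (fun v =>
            (i < j ∧ 2 * lam * k * ((A j).card : ℝ) < ((A j).card : ℝ) - outd Adj v (A j)) ∨
            (j < i ∧ 2 * lam * k * ((A j).card : ℝ) < ((A j).card : ℝ) - ind Adj v (A j)))).card : ℝ)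
            ≤ (A i).card / (2 * k) := by
          intro j
          rcases lt_trichotomy i j with h | h | h
          · refine le_trans ?_ (pairOut i j h)
            have hm : (A i).filter (fun v =>
                (i < j ∧ 2 * lam * k * ((A j).card : ℝ) < ((A j).card : ℝ) - outd Adj v (A j)) ∨
                (j < i ∧ 2 * lam * k * ((A j).card : ℝ) < ((A j).card : ℝ) - ind Adj v (A j)))
                ⊆ (A i).filter (fun v =>
                  2 * lam * (k : ℝ) * ((A j).card : ℝ) < ((A j).card : ℝ) - outd Adj v (A j)) := by
              apply Finset.monotone_filter_right
              intro v _ hv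
              rcases hv with ⟨_, hP⟩ | ⟨hji, _⟩
              · exact hP
              · exact absurd hji (lt_asymm h)
            exact_mod_cast Finset.card_le_card hm
          · subst h
            have he : (A i).filter (fun v =>
                (i < i ∧ 2 * lam * k * ((A i).card : ℝ) < ((A i).card : ℝ) - outd Adj v (A i)) ∨
                (i < i ∧ 2 * lam * k * ((A i).card : ℝ) < ((A i).card : ℝ) - ind Adj v (A i))) = ∅ := by
              apply Finset.filter_false_of_mem
              intro v hv
              rintro (⟨hii, _⟩ | ⟨hii, _⟩) <;> exact lt_irrefl i hii
            rw [he]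
            simp only [Finset.card_empty, Nat.cast_zero]
            have := hApos i
            positivity
          · refine le_trans ?_ (pairIn j i h)
            have hm : (A i).filter (fun v =>
                (i < j ∧ 2 * lam * k * ((A j).card : ℝ) < ((A j).card : ℝ) - outd Adj v (A j)) ∨
                (j < i ∧ 2 * lam * k * ((A j).card : ℝ) < ((A j).card : ℝ) - ind Adj v (A j)))
                ⊆ (A i).filter (fun w =>
                  2 * lam * (k : ℝ) * ((A j).card : ℝ) < ((A j).card : ℝ) - ind Adj w (A j)) := by
              apply Finset.monotone_filter_right
              intro v _ hv
              rcases hv with ⟨hij', _⟩ | ⟨_, hQ⟩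
              · exact absurd hij' (lt_asymm h)
              · exact hQ
            exact_mod_cast Finset.card_le_card hm
        calc ((A i \ A' i).card : ℝ)
            ≤ ((∑ j : Fin k, ((A i).filter (fun v =>
                (i < j ∧ 2 * lam * k * ((A j).card : ℝ) < ((A j).card : ℝ) - outd Adj v (A j)) ∨
                (j < i ∧ 2 * lam * k * ((A j).card : ℝ) < ((A j).card : ℝ) - ind Adj v (A j)))).card : ℕ) : ℝ) := by
              exact_mod_cast h1
          _ = ∑ j : Fin k, (((A i).filter (fun v =>
                (i < j ∧ 2 * lam * k * ((A j).card : ℝ) < ((A j).card : ℝ) - outd Adj v (A j)) ∨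
                (j < i ∧ 2 * lam * k * ((A j).card : ℝ) < ((A j).card : ℝ) - ind Adj v (A j)))).card : ℝ) := by
              push_cast; rfl
          _ ≤ ∑ _j : Fin k, ((A i).card : ℝ) / (2 * k) := Finset.sum_le_sum (fun j _ => h2 j)
          _ = k * (((A i).card : ℝ) / (2 * k)) := by
              rw [Finset.sum_const, Finset.card_univ, Fintype.card_fin, nsmul_eq_mul]
          _ = ((A i).card : ℝ) / 2 := by
              field_simp
      have hcards : ((A i \ A' i).card : ℝ) = (A i).card - (A' i).card := by
        rw [Finset.card_sdiff_of_subset (hsub i), Nat.cast_sub (Finset.card_le_card (hsub i))]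
      linarith
    have hA'pos : ∀ i, (0 : ℝ) < (A' i).card := by
      intro i
      have := hApos i
      have := hhalf i
      linarith
    refine ⟨A', hsub, fun i => hhalf i, ?_⟩
    intro i j hij
    have hsd : ∀ m : Fin k, ((A m \ A' m).card : ℝ) = (A m).card - (A' m).card := by
      intro m
      rw [Finset.card_sdiff_of_subset (hsub m), Nat.cast_sub (Finset.card_le_card (hsub m))]
    have hmul : ∀ m : Fin k, 2 * lam * (k : ℝ) * ((A m).card : ℝ)
        ≤ 4 * lam * k * ((A' m).card : ℝ) := by
      intro m
      have h4 : ((A m).card : ℝ) ≤ 2 * (A' m).card := by linarith [hhalf m]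
      have := mul_le_mul_of_nonneg_left h4 (show (0 : ℝ) ≤ 2 * lam * k by positivity)
      linarith
    constructor
    · intro v hv
      rw [hA'def] at hv
      obtain ⟨hvA, hP, _⟩ := Finset.mem_filter.mp hv
      have h1 : ((A j).card : ℝ) - outd Adj v (A j) ≤ 2 * lam * k * ((A j).card : ℝ) := hP j hij
      have h2N := outd_le Adj (hsub j) v
      have h2 : (outd Adj v (A j) : ℝ) ≤ (outd Adj v (A' j) : ℝ) + ((A j).card - (A' j).card) := by
        have h2R : (outd Adj v (A j) : ℝ) ≤ (outd Adj v (A' j) : ℝ) + ((A j \ A' j).card : ℝ) := by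
          exact_mod_cast h2N
        rw [hsd j] at h2R
        linarith
      rw [dens_singleton_left, ge_iff_le, le_div_iff₀ (hA'pos j)]
      nlinarith [hmul j]
    · intro w hw
      rw [hA'def] at hw
      obtain ⟨hwA, _, hQ⟩ := Finset.mem_filter.mp hw
      have h1 : ((A i).card : ℝ) - ind Adj w (A i) ≤ 2 * lam * k * ((A i).card : ℝ) := hQ i hij
      have h2N := ind_le Adj (hsub i) w
      have h2 : (ind Adj w (A i) : ℝ) ≤ (ind Adj w (A' i) : ℝ) + ((A i).card - (A' i).card) := by
        have h2R : (ind Adj w (A i) : ℝ) ≤ (ind Adj w (A' i) : ℝ) + ((A i \ A' i).card : ℝ) := by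
          exact_mod_cast h2N
        rw [hsd i] at h2R
        linarith
      rw [dens_singleton_right, ge_iff_le, le_div_iff₀ (hA'pos i)]
      nlinarith [hmul i]
end
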